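/- The map Φ sending an alternative tableau of size n in which each column contains an up arrow to a linked partition of {1,...,n} — obtained by labeling the border steps 1,...,n from northeast to southwest and, for each column j with an up arrow in cell (i_1, j) and left arrows in cells (i_2,j),...,(i_t,j) with i_2 < ... < i_t, drawing arcs (i_1,i_2), (i_2,i_3), ..., (i_t,j) — is a bijection onto the set of linked partitions of {1,...,n}. -/

import Mathlib

open Finset Polynomial
open scoped Classical

/-! ### Tree-like tableaux (grid model)
A cell is a pair (row index, column index), both 0-based.  A Ferrers diagram
is a finite lower set of cells.  A tree-like tableau of size `n` is a pair
`(F, P)` where `P` is the set of pointed cells of the diagram `F`. -/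

def IsFerrersGrid (F : Finset (ℕ × ℕ)) : Prop :=
  ∀ p ∈ F, ∀ i j : ℕ, i ≤ p.1 → j ≤ p.2 → (i, j) ∈ F

def IsTLT (F P : Finset (ℕ × ℕ)) : Prop :=
  F.Nonempty ∧ IsFerrersGrid F ∧ P ⊆ F ∧ (0, 0) ∈ P ∧
  (∀ p ∈ P, p ≠ (0, 0) →
    Xor' (∃ i < p.1, (i, p.2) ∈ P) (∃ j < p.2, (p.1, j) ∈ P)) ∧
  (∀ p ∈ F, ∃ q ∈ P, q.1 = p.1) ∧
  (∀ p ∈ F, ∃ q ∈ P, q.2 = p.2)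

/-- The finite set of tree-like tableaux of size `n`. -/
noncomputable def TLT (n : ℕ) : Finset (Finset (ℕ × ℕ) × Finset (ℕ × ℕ)) :=
  ((Finset.range n ×ˢ Finset.range n).powerset ×ˢ
    (Finset.range n ×ˢ Finset.range n).powerset).filter
    (fun T => IsTLT T.1 T.2 ∧ T.2.card = n)

/-- number of non-root points in the topmost row -/
noncomputable def topT (P : Finset (ℕ × ℕ)) : ℕ :=
  (P.filter (fun p => p.1 = 0 ∧ p.2 ≠ 0)).card
/-- number of non-root points in the leftmost column -/
noncomputable def leftT (P : Finset (ℕ × ℕ)) : ℕ :=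
  (P.filter (fun p => p.2 = 0 ∧ p.1 ≠ 0)).card
/-- corners of a Ferrers diagram -/
noncomputable def cornersT (F : Finset (ℕ × ℕ)) : Finset (ℕ × ℕ) :=
  F.filter (fun p => (p.1 + 1, p.2) ∉ F ∧ (p.1, p.2 + 1) ∉ F)
/-- non-occupied corners -/
noncomputable def nocT (F P : Finset (ℕ × ℕ)) : ℕ :=
  ((cornersT F).filter (fun p => p ∉ P)).card
/-- occupied corners -/
noncomputable def ocT (F P : Finset (ℕ × ℕ)) : ℕ :=
  ((cornersT F).filter (fun p => p ∈ P)).card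
/-- symmetric (invariant under reflection across the main diagonal) -/
def IsSymTLT (F P : Finset (ℕ × ℕ)) : Prop :=
  F.image Prod.swap = F ∧ P.image Prod.swap = P

/-! ### Alternative tableaux (border-label model)
A Ferrers diagram of size `n` (empty rows and columns allowed) is encoded by
the set `C ⊆ {1,…,n}` of its column labels (labels of the south-east border
steps, read from north-east to south-west); the remaining labels are row
labels.  Row `r` and column `c` intersect in a cell (written `(r, c)`)
exactly when `r < c`.  Inside a row, cells further to the left have *larger*
column labels; inside a column, cells further up have *smaller* row labels.
An alternative tableau is `(C, L, U)` where `L` (resp. `U`) is the set of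
cells containing a left (resp. up) arrow. -/

def IsAT (n : ℕ) (C : Finset ℕ) (L U : Finset (ℕ × ℕ)) : Prop :=
  C ⊆ Finset.Icc 1 n ∧ Disjoint L U ∧
  (∀ p ∈ L ∪ U, p.1 ∈ Finset.Icc 1 n ∧ p.1 ∉ C ∧ p.2 ∈ C ∧ p.1 < p.2) ∧
  (∀ p ∈ L, ∀ c' : ℕ, p.2 < c' → (p.1, c') ∉ L ∪ U) ∧
  (∀ p ∈ U, ∀ r' : ℕ, r' < p.1 → (r', p.2) ∉ L ∪ U)

/-- the finite set of alternative tableaux of size `n` -/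
noncomputable def ATset (n : ℕ) :
    Finset (Finset ℕ × Finset (ℕ × ℕ) × Finset (ℕ × ℕ)) :=
  ((Finset.Icc 1 n).powerset ×ˢ
    ((Finset.Icc 1 n ×ˢ Finset.Icc 1 n).powerset ×ˢ
      (Finset.Icc 1 n ×ˢ Finset.Icc 1 n).powerset)).filter
    (fun T => IsAT n T.1 T.2.1 T.2.2)

/-- alternative tableaux of size `n` in which every column contains an up arrow -/
noncomputable def ATstar (n : ℕ) :
    Finset (Finset ℕ × Finset (ℕ × ℕ) × Finset (ℕ × ℕ)) :=
  (ATset n).filter (fun T => ∀ c ∈ T.1, ∃ p ∈ T.2.2, p.2 = c)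

/-- label of the topmost row -/
noncomputable def topRowA (n : ℕ) (C : Finset ℕ) : ℕ :=
  WithTop.untopD 0 ((Finset.Icc 1 n \ C).min)
/-- number of arrows in the topmost row -/
noncomputable def topA (n : ℕ) (C : Finset ℕ) (L U : Finset (ℕ × ℕ)) : ℕ :=
  ((L ∪ U).filter (fun p => p.1 = topRowA n C)).card
/-- number of unrestricted rows (rows with no left arrow) -/
noncomputable def urrA (n : ℕ) (C : Finset ℕ) (L : Finset (ℕ × ℕ)) : ℕ :=
  ((Finset.Icc 1 n \ C).filter (fun r => ∀ p ∈ L, p.1 ≠ r)).card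
/-- number of non-occupied corners (the corners are exactly the cells `(c-1, c)`
with `c` a column label and `c-1` a row label) -/
noncomputable def nocA (n : ℕ) (C : Finset ℕ) (L U : Finset (ℕ × ℕ)) : ℕ :=
  (C.filter (fun c => c - 1 ∈ Finset.Icc 1 n \ C ∧ (c - 1, c) ∉ L ∪ U)).card
/-- symmetric alternative tableau of size `2n` (reflection across the main
diagonal exchanges border label `k` with `2n+1-k`, rows with columns and
left arrows with up arrows) -/
def IsSymAT (n : ℕ) (C : Finset ℕ) (L U : Finset (ℕ × ℕ)) : Prop :=
  (∀ k ∈ Finset.Icc 1 (2 * n), (k ∈ C ↔ (2 * n + 1 - k) ∉ C)) ∧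
  (∀ r c : ℕ, (r, c) ∈ L ↔ (2 * n + 1 - c, 2 * n + 1 - r) ∈ U)

/-! ### Linked partitions (linear representation / arc model)
A linked partition of `{1,…,n}` is identified with its set of arcs `(i, j)`,
`i < j`: each vertex is the right-hand endpoint of at most one arc. -/

def IsLP (n : ℕ) (A : Finset (ℕ × ℕ)) : Prop :=
  (∀ p ∈ A, 1 ≤ p.1 ∧ p.1 < p.2 ∧ p.2 ≤ n) ∧
  (∀ p ∈ A, ∀ q ∈ A, p.2 = q.2 → p.1 = q.1)

noncomputable def LP (n : ℕ) : Finset (Finset (ℕ × ℕ)) :=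
  ((Finset.Icc 1 n ×ˢ Finset.Icc 1 n).powerset).filter (IsLP n)

/-- number of origins plus singletons (= vertices with no incoming arc) -/
noncomputable def osL (n : ℕ) (A : Finset (ℕ × ℕ)) : ℕ :=
  ((Finset.Icc 1 n).filter (fun j => ∀ p ∈ A, p.2 ≠ j)).card
/-- number of arcs with left-hand endpoint `1` -/
noncomputable def oneL (A : Finset (ℕ × ℕ)) : ℕ :=
  (A.filter (fun p => p.1 = 1)).card
/-- a destination: only a right-hand endpoint -/
def IsDest (A : Finset (ℕ × ℕ)) (j : ℕ) : Prop :=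
  (∃ p ∈ A, p.2 = j) ∧ ∀ p ∈ A, p.1 ≠ j

/-- consecutive pairs of a finite set of naturals -/
noncomputable def consecPairs (S : Finset ℕ) : Finset (ℕ × ℕ) :=
  (S ×ˢ S).filter (fun p => p.1 < p.2 ∧ ∀ k ∈ S, ¬(p.1 < k ∧ k < p.2))

/-- the set of row labels of cells of column `c` containing an arrow -/
noncomputable def colRows (L U : Finset (ℕ × ℕ)) (c : ℕ) : Finset ℕ :=
  ((L ∪ U).filter (fun p => p.2 = c)).image Prod.fst

/-- the map `Φ`: for each column `j`, with the up arrow in row `i₁` and the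
left arrows in rows `i₂ < … < i_t`, draw the arcs `(i₁,i₂), …, (i_{t-1},i_t), (i_t, j)`,
i.e. the consecutive pairs of `{i₁,…,i_t, j}`. -/
noncomputable def Phi (T : Finset ℕ × Finset (ℕ × ℕ) × Finset (ℕ × ℕ)) :
    Finset (ℕ × ℕ) :=
  T.1.biUnion (fun c => consecPairs (insert c (colRows T.2.1 T.2.2 c)))

/-! ### Type B alternative tableaux
Encoded by `(C, L, U)` with `C ⊆ Icc 1 n` the set of column labels of the
subdiagram; rows of the shifted diagram are labelled by
`(Icc 1 n \ C) ∪ (-C)`, rows higher up having smaller labels.  Row `x` and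
column `c` intersect in a cell exactly when (`x > 0` and `x < c`) or
(`x < 0` and `-x ≤ c`); the cell `(-c, c)` is the diagonal cell of row `-c`. -/

def cellB (n : ℕ) (C : Finset ℤ) (x c : ℤ) : Prop :=
  c ∈ C ∧ ((1 ≤ x ∧ x ≤ (n : ℤ) ∧ x ∉ C ∧ x < c) ∨ (x < 0 ∧ -x ∈ C ∧ -x ≤ c))

def IsATB (n : ℕ) (C : Finset ℤ) (L U : Finset (ℤ × ℤ)) : Prop :=
  C ⊆ Finset.Icc 1 (n : ℤ) ∧ Disjoint L U ∧
  (∀ p ∈ L ∪ U, p.2 ∈ C ∧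
    ((1 ≤ p.1 ∧ p.1 ≤ (n : ℤ) ∧ p.1 ∉ C ∧ p.1 < p.2) ∨
      (p.1 < 0 ∧ -p.1 ∈ C ∧ -p.1 < p.2))) ∧
  (∀ p ∈ L, ∀ c' : ℤ, p.2 < c' → (p.1, c') ∉ L ∪ U) ∧
  (∀ p ∈ U, ∀ x' : ℤ, x' < p.1 → (x', p.2) ∉ L ∪ U) ∧
  (∀ i ∈ C, (∃ p ∈ U, p.2 = i) → ∀ c' : ℤ, (-i, c') ∉ L ∪ U)

noncomputable def ATB (n : ℕ) :
    Finset (Finset ℤ × Finset (ℤ × ℤ) × Finset (ℤ × ℤ)) :=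
  ((Finset.Icc (1 : ℤ) (n : ℤ)).powerset ×ˢ
    ((Finset.Icc (-(n : ℤ)) (n : ℤ) ×ˢ Finset.Icc (1 : ℤ) (n : ℤ)).powerset ×ˢ
      (Finset.Icc (-(n : ℤ)) (n : ℤ) ×ˢ Finset.Icc (1 : ℤ) (n : ℤ)).powerset)).filter
    (fun T => IsATB n T.1 T.2.1 T.2.2)

/-- the row labels of a type B alternative tableau -/
noncomputable def rowsB (n : ℕ) (C : Finset ℤ) : Finset ℤ :=
  (Finset.Icc (1 : ℤ) (n : ℤ) \ C) ∪ C.image (fun c => -c)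

/-- number of unrestricted rows: row `x` is unrestricted when it contains no
left arrow and column `|x|` (if it exists) contains no up arrow -/
noncomputable def urrB (n : ℕ) (C : Finset ℤ) (L U : Finset (ℤ × ℤ)) : ℕ :=
  ((rowsB n C).filter (fun x => (∀ p ∈ L, p.1 ≠ x) ∧ ∀ p ∈ U, p.2 ≠ |x|)).card

/-- the corners of the shifted Ferrers diagram -/
noncomputable def cornersB (n : ℕ) (C : Finset ℤ) : Finset (ℤ × ℤ) :=
  (Finset.Icc (-(n : ℤ)) (n : ℤ) ×ˢ Finset.Icc (1 : ℤ) (n : ℤ)).filter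
    (fun p => cellB n C p.1 p.2 ∧ (∀ x' : ℤ, p.1 < x' → ¬ cellB n C x' p.2) ∧
      (∀ c' : ℤ, c' < p.2 → ¬ cellB n C p.1 c'))

/-- number of non-occupied diagonal corners -/
noncomputable def nocDiagB (n : ℕ) (C : Finset ℤ) (L U : Finset (ℤ × ℤ)) : ℕ :=
  ((cornersB n C).filter (fun p => p.1 = -p.2 ∧ p ∉ L ∪ U)).card
/-- number of non-occupied non-diagonal corners -/
noncomputable def nocOffB (n : ℕ) (C : Finset ℤ) (L U : Finset (ℤ × ℤ)) : ℕ :=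
  ((cornersB n C).filter (fun p => p.1 ≠ -p.2 ∧ p ∉ L ∪ U)).card

/-! ### Type B linked partitions
A pair `(V, A)`: for each `i ∈ {1,…,n}` exactly one of `i, -i` belongs to
the vertex set `V`; `A` is the set of arcs `(x, y)`, `x < y`, with each
vertex the right-hand endpoint of at most one arc. -/

def IsLPB (n : ℕ) (V : Finset ℤ) (A : Finset (ℤ × ℤ)) : Prop :=
  (∀ v ∈ V, 1 ≤ |v| ∧ |v| ≤ (n : ℤ)) ∧
  (∀ i ∈ Finset.Icc (1 : ℤ) (n : ℤ), ((i ∈ V ∧ -i ∉ V) ∨ (-i ∈ V ∧ i ∉ V))) ∧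
  (∀ p ∈ A, p.1 ∈ V ∧ p.2 ∈ V ∧ p.1 < p.2) ∧
  (∀ p ∈ A, ∀ q ∈ A, p.2 = q.2 → p.1 = q.1)

noncomputable def LPB (n : ℕ) : Finset (Finset ℤ × Finset (ℤ × ℤ)) :=
  ((Finset.Icc (-(n : ℤ)) (n : ℤ)).powerset ×ˢ
    (Finset.Icc (-(n : ℤ)) (n : ℤ) ×ˢ Finset.Icc (-(n : ℤ)) (n : ℤ)).powerset).filter
    (fun T => IsLPB n T.1 T.2)

/-- number of origins plus singletons (= vertices with no incoming arc) -/
noncomputable def osB (V : Finset ℤ) (A : Finset (ℤ × ℤ)) : ℕ :=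
  (V.filter (fun v => ∀ p ∈ A, p.2 ≠ v)).card

/-- a legal destination: `j` is only a right-hand endpoint, and its incoming
arc `(a, j)` satisfies `|a| < |j|` -/
def IsLegalDestB (A : Finset (ℤ × ℤ)) (j : ℤ) : Prop :=
  (∃ p ∈ A, p.2 = j ∧ |p.1| < |j|) ∧ ∀ p ∈ A, p.1 ≠ j

/-- consecutive pairs of a finite set of integers -/
noncomputable def consecPairsZ (S : Finset ℤ) : Finset (ℤ × ℤ) :=
  (S ×ˢ S).filter (fun p => p.1 < p.2 ∧ ∀ k ∈ S, ¬(p.1 < k ∧ k < p.2))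

/-- row labels of cells of column `c` containing an arrow -/
noncomputable def colRowsB (L U : Finset (ℤ × ℤ)) (c : ℤ) : Finset ℤ :=
  ((L ∪ U).filter (fun p => p.2 = c)).image Prod.fst

/-- column `c` contains an up arrow -/
def HasUp (U : Finset (ℤ × ℤ)) (c : ℤ) : Prop := ∃ p ∈ U, p.2 = c

/-- the map `Φ_B`: columns with an up arrow give positive vertices and chains
of arcs through their arrows (consecutive pairs of the arrow rows together
with the column label); columns without an up arrow give negative vertices
`-j` and arcs from `-j` to each row containing a left arrow of that column;
rows give positive vertices. -/
noncomputable def PhiB (n : ℕ) (T : Finset ℤ × Finset (ℤ × ℤ) × Finset (ℤ × ℤ)) :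
    Finset ℤ × Finset (ℤ × ℤ) :=
  ((Finset.Icc (1 : ℤ) (n : ℤ) \ T.1) ∪ T.1.filter (fun c => HasUp T.2.2 c) ∪
      (T.1.filter (fun c => ¬ HasUp T.2.2 c)).image (fun c => -c),
    (T.1.filter (fun c => HasUp T.2.2 c)).biUnion
        (fun c => consecPairsZ (insert c (colRowsB T.2.1 T.2.2 c))) ∪
      (T.1.filter (fun c => ¬ HasUp T.2.2 c)).biUnion
        (fun c => (colRowsB T.2.1 T.2.2 c).image (fun r => (-c, r))))

section PhiAux

def ReachA (A : Finset (ℕ × ℕ)) : ℕ → ℕ → Prop :=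
  Relation.ReflTransGen (fun x y => (x, y) ∈ A)

noncomputable def colOf (n : ℕ) (A : Finset (ℕ × ℕ)) (b : ℕ) : ℕ :=
  WithBot.unbotD 0 (((Finset.Icc 1 n).filter (fun v => ReachA A b v)).max)

lemma mem_consecPairs {S : Finset ℕ} {a b : ℕ} :
    (a, b) ∈ consecPairs S ↔ a ∈ S ∧ b ∈ S ∧ a < b ∧ ∀ k ∈ S, ¬(a < k ∧ k < b) := by
  simp [consecPairs, Finset.mem_filter, Finset.mem_product, and_assoc]

lemma consec_succ_exists {S : Finset ℕ} {x y : ℕ} (hx : x ∈ S) (hy : y ∈ S) (hxy : x < y) :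
    ∃ z ∈ S, x < z ∧ (x, z) ∈ consecPairs S := by
  set F := S.filter (fun k => x < k) with hF
  have hne : F.Nonempty := ⟨y, by simp [hF, hy, hxy]⟩
  have hz : F.min' hne ∈ S ∧ x < F.min' hne := Finset.mem_filter.1 (Finset.min'_mem F hne)
  refine ⟨_, hz.1, hz.2, ?_⟩
  rw [mem_consecPairs]
  refine ⟨hx, hz.1, hz.2, fun k hk hcon => ?_⟩
  have hkF : k ∈ F := by rw [hF, Finset.mem_filter]; exact ⟨hk, hcon.1⟩
  have := Finset.min'_le F k hkF
  omega

lemma consec_pred_exists {S : Finset ℕ} {x y : ℕ} (hx : x ∈ S) (hy : y ∈ S) (hxy : x < y) :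
    ∃ z ∈ S, z < y ∧ (z, y) ∈ consecPairs S := by
  set F := S.filter (fun k => k < y) with hF
  have hne : F.Nonempty := ⟨x, by simp [hF, hx, hxy]⟩
  have hz : F.max' hne ∈ S ∧ F.max' hne < y := Finset.mem_filter.1 (Finset.max'_mem F hne)
  refine ⟨_, hz.1, hz.2, ?_⟩
  rw [mem_consecPairs]
  refine ⟨hz.1, hy, hz.2, fun k hk hcon => ?_⟩
  have hkF : k ∈ F := by rw [hF, Finset.mem_filter]; exact ⟨hk, hcon.2⟩
  have := Finset.le_max' F k hkF
  omega

lemma consec_left_unique {S : Finset ℕ} {a a' b : ℕ}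
    (h : (a, b) ∈ consecPairs S) (h' : (a', b) ∈ consecPairs S) : a = a' := by
  rw [mem_consecPairs] at h h'
  rcases lt_trichotomy a a' with hlt | he | hlt
  · exact absurd ⟨hlt, h'.2.2.1⟩ (h.2.2.2 a' h'.1)
  · exact he
  · exact absurd ⟨hlt, h.2.2.1⟩ (h'.2.2.2 a h.1)

lemma consec_right_unique {S : Finset ℕ} {a b b' : ℕ}
    (h : (a, b) ∈ consecPairs S) (h' : (a, b') ∈ consecPairs S) : b = b' := by
  rw [mem_consecPairs] at h h'
  rcases lt_trichotomy b b' with hlt | he | hlt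
  · exact absurd ⟨h.2.2.1, hlt⟩ (h'.2.2.2 b h.2.1)
  · exact he
  · exact absurd ⟨h'.2.2.1, hlt⟩ (h.2.2.2 b' h'.2.1)

variable {n : ℕ} {A : Finset (ℕ × ℕ)}

lemma reach_le (hA : IsLP n A) {x y : ℕ} (h : ReachA A x y) : x ≤ y := by
  induction h with
  | refl => exact le_rfl
  | tail h1 h2 ih => have := (hA.1 _ h2).2.1; omega

lemma reach_mem (hA : IsLP n A) {x y : ℕ} (hx : x ∈ Finset.Icc 1 n) (h : ReachA A x y) :
    y ∈ Finset.Icc 1 n := by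
  induction h with
  | refl => exact hx
  | tail h1 h2 ih =>
      have := hA.1 _ h2
      simp only [Finset.mem_Icc] at *
      omega

lemma colOf_eq_max' {x : ℕ}
    (hne : ((Finset.Icc 1 n).filter (fun v => ReachA A x v)).Nonempty) :
    colOf n A x = ((Finset.Icc 1 n).filter (fun v => ReachA A x v)).max' hne := by
  unfold colOf
  rw [← Finset.coe_max' hne]
  rfl

lemma le_colOf (hA : IsLP n A) {x v : ℕ} (hx : x ∈ Finset.Icc 1 n) (h : ReachA A x v) :
    v ≤ colOf n A x := by
  have hv : v ∈ (Finset.Icc 1 n).filter (fun v => ReachA A x v) :=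
    Finset.mem_filter.2 ⟨reach_mem hA hx h, h⟩
  rw [colOf_eq_max' ⟨v, hv⟩]
  exact Finset.le_max' _ _ hv

lemma reach_colOf (hx : x ∈ Finset.Icc 1 n) :
    ReachA A x (colOf n A x) ∧ colOf n A x ∈ Finset.Icc 1 n := by
  have hxm : x ∈ (Finset.Icc 1 n).filter (fun v => ReachA A x v) :=
    Finset.mem_filter.2 ⟨hx, Relation.ReflTransGen.refl⟩
  have hne : ((Finset.Icc 1 n).filter (fun v => ReachA A x v)).Nonempty := ⟨x, hxm⟩
  have := Finset.max'_mem _ hne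
  rw [Finset.mem_filter] at this
  rw [colOf_eq_max' hne]
  exact ⟨this.2, this.1⟩

lemma colOf_le_of_reach (hA : IsLP n A) {x y : ℕ} (hx : x ∈ Finset.Icc 1 n)
    (h : ReachA A x y) : colOf n A y ≤ colOf n A x := by
  have hy := reach_mem hA hx h
  exact le_colOf hA hx (h.trans (reach_colOf hy).1)

lemma colOf_eq_self (hA : IsLP n A) {x : ℕ} (hx : x ∈ Finset.Icc 1 n)
    (hout : ∀ q ∈ A, q.1 ≠ x) : colOf n A x = x := by
  have h := (reach_colOf hx : ReachA A x _ ∧ _).1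
  rcases h.cases_head with he | ⟨c, hc, _⟩
  · exact he.symm
  · exact absurd rfl (hout _ hc)

lemma reach_total (hA : IsLP n A) {b b' c : ℕ} (h : ReachA A b c) (h' : ReachA A b' c) :
    ReachA A b b' ∨ ReachA A b' b := by
  induction h using Relation.ReflTransGen.head_induction_on with
  | refl => exact Or.inr h'
  | head hbx hxc ih =>
      rcases ih with h1 | h1
      · exact Or.inl (Relation.ReflTransGen.head hbx h1)
      · rcases h1.cases_tail with he | ⟨y, hy1, hy2⟩
        · exact Or.inl (he ▸ Relation.ReflTransGen.single hbx)
        · have : y = _ := hA.2 _ hy2 _ hbx rfl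
          subst this
          exact Or.inr hy1

noncomputable def Ssrc (n : ℕ) (A : Finset (ℕ × ℕ)) (c : ℕ) : Finset ℕ :=
  (Finset.Icc 1 n).filter (fun r => ∃ s, (r, s) ∈ A ∧ colOf n A s = c)

lemma arc_mem_Icc (hA : IsLP n A) {a b : ℕ} (hab : (a, b) ∈ A) :
    a ∈ Finset.Icc 1 n ∧ b ∈ Finset.Icc 1 n := by
  have := hA.1 _ hab
  simp only [Finset.mem_Icc]
  omega

lemma src_of_colOf (hA : IsLP n A) {b c : ℕ} (hb : colOf n A b = c) (hbc : b ≠ c)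
    (hbI : b ∈ Finset.Icc 1 n) : b ∈ Ssrc n A c := by
  have hr : ReachA A b c := hb ▸ (reach_colOf hbI).1
  rcases hr.cases_head with he | ⟨s, hs1, hs2⟩
  · exact absurd he hbc
  · have hsI := (arc_mem_Icc hA hs1).2
    have h1 : colOf n A s ≤ c := hb ▸ colOf_le_of_reach hA hbI (Relation.ReflTransGen.single hs1)
    have h2 : c ≤ colOf n A s := le_colOf hA hsI hs2
    exact Finset.mem_filter.2 ⟨hbI, s, hs1, le_antisymm h1 h2⟩

lemma mem_Ssrc_lt (hA : IsLP n A) {r c : ℕ} (hr : r ∈ Ssrc n A c) : r < c := by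
  obtain ⟨hrI, s, hs, hcol⟩ := Finset.mem_filter.1 hr
  have h1 := (hA.1 _ hs).2.1
  have h2 : s ≤ colOf n A s := reach_le hA (reach_colOf (arc_mem_Icc hA hs).2).1
  omega

lemma reach_c_of_colOf (hA : IsLP n A) {b c : ℕ} (hb : colOf n A b = c)
    (hbI : b ∈ Finset.Icc 1 n) : ReachA A b c := hb ▸ (reach_colOf hbI).1

/-- arcs of class `c` are consecutive pairs of `insert c (Ssrc n A c)` -/
lemma class_arc_mem_consec (hA : IsLP n A) {a b c : ℕ} (hab : (a, b) ∈ A)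
    (hb : colOf n A b = c) : (a, b) ∈ consecPairs (insert c (Ssrc n A c)) := by
  have hbnds := hA.1 _ hab
  have haI := (arc_mem_Icc hA hab).1
  have hbI := (arc_mem_Icc hA hab).2
  have haS : a ∈ Ssrc n A c := Finset.mem_filter.2 ⟨haI, b, hab, hb⟩
  have hbV : b ∈ insert c (Ssrc n A c) := by
    by_cases hbc : b = c
    · exact hbc ▸ Finset.mem_insert_self _ _
    · exact Finset.mem_insert_of_mem (src_of_colOf hA hb hbc hbI)
  rw [mem_consecPairs]
  refine ⟨Finset.mem_insert_of_mem haS, hbV, hbnds.2.1, fun k hk hcon => ?_⟩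
  have hblec : b ≤ c := hb ▸ le_colOf hA hbI Relation.ReflTransGen.refl
  rcases Finset.mem_insert.1 hk with rfl | hkS
  · omega
  · obtain ⟨hkI, w, hkw, hw⟩ := Finset.mem_filter.1 hkS
    have hwI := (arc_mem_Icc hA hkw).2
    have hrw : ReachA A w c := reach_c_of_colOf hA hw hwI
    have hrb : ReachA A b c := reach_c_of_colOf hA hb hbI
    have hkww := (hA.1 _ hkw).2.1
    rcases reach_total hA hrw hrb with h1 | h1
    · rcases h1.cases_tail with he | ⟨y, hy1, hy2⟩
      · -- w = b : unique incoming gives k = a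
        subst he
        have : k = a := hA.2 _ hkw _ hab rfl
        omega
      · have : y = a := hA.2 _ hy2 _ hab rfl
        subst this
        have := reach_le hA hy1
        omega
    · rcases h1.cases_tail with he | ⟨y, hy1, hy2⟩
      · subst he
        have : a = k := hA.2 _ hab _ hkw rfl
        omega
      · have : y = k := hA.2 _ hy2 _ hkw rfl
        subst this
        have := reach_le hA hy1
        omega

lemma consec_mem_class (hA : IsLP n A) {x y c : ℕ}
    (h : (x, y) ∈ consecPairs (insert c (Ssrc n A c))) :
    (x, y) ∈ A ∧ colOf n A y = c := by
  rw [mem_consecPairs] at h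
  obtain ⟨hx, hy, hxy, hmid⟩ := h
  have hSlt : ∀ r ∈ Ssrc n A c, r < c := fun r hr => mem_Ssrc_lt hA hr
  have hylec : y ≤ c := by
    rcases Finset.mem_insert.1 hy with rfl | hyS
    · exact le_rfl
    · exact le_of_lt (hSlt _ hyS)
  have hxS : x ∈ Ssrc n A c := by
    rcases Finset.mem_insert.1 hx with rfl | hxS
    · omega
    · exact hxS
  obtain ⟨hxI, w, hxw, hw⟩ := Finset.mem_filter.1 hxS
  have hwI := (arc_mem_Icc hA hxw).2
  have hxltw := (hA.1 _ hxw).2.1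
  have hwV : w ∈ insert c (Ssrc n A c) := by
    by_cases hwc : w = c
    · exact hwc ▸ Finset.mem_insert_self _ _
    · exact Finset.mem_insert_of_mem (src_of_colOf hA hw hwc hwI)
  have hwnotmid := hmid w hwV
  -- so w ≥ y
  have hyw : y ≤ w := by omega
  rcases eq_or_lt_of_le hyw with rfl | hylt
  · exact ⟨hxw, hw⟩
  · -- y < w, derive contradiction
    exfalso
    have hyc : y ≠ c := by
      rcases Finset.mem_insert.1 hwV with rfl | hwS
      · omega
      · have := hSlt _ hwS; omega
    have hyS : y ∈ Ssrc n A c := by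
      rcases Finset.mem_insert.1 hy with rfl | h'
      · omega
      · exact h'
    obtain ⟨hyI, w', hyw', hw'⟩ := Finset.mem_filter.1 hyS
    have hw'I := (arc_mem_Icc hA hyw').2
    have hrw : ReachA A w c := reach_c_of_colOf hA hw hwI
    have hrw' : ReachA A w' c := reach_c_of_colOf hA hw' hw'I
    have hylw' := (hA.1 _ hyw').2.1
    rcases reach_total hA hrw' hrw with h1 | h1
    · rcases h1.cases_tail with he | ⟨z, hz1, hz2⟩
      · subst he
        have : y = x := hA.2 _ hyw' _ hxw rfl
        omega
      · have : z = x := hA.2 _ hz2 _ hxw rfl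
        subst this
        have := reach_le hA hz1
        omega
    · rcases h1.cases_tail with he | ⟨z, hz1, hz2⟩
      · subst he
        have : x = y := hA.2 _ hxw _ hyw' rfl
        omega
      · have : z = y := hA.2 _ hz2 _ hyw' rfl
        subst this
        have := reach_le hA hz1
        omega

lemma dest_colOf (hA : IsLP n A) {a b : ℕ} (hab : (a, b) ∈ A) :
    IsDest A (colOf n A b) ∧ colOf n A b ∈ Finset.Icc 1 n := by
  have hbI := (arc_mem_Icc hA hab).2
  obtain ⟨hreach, hcI⟩ := reach_colOf (A := A) hbI
  refine ⟨⟨?_, ?_⟩, hcI⟩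
  · rcases hreach.cases_tail with he | ⟨y, hy1, hy2⟩
    · exact ⟨(a, b), hab, he.symm⟩
    · exact ⟨(y, colOf n A b), hy2, rfl⟩
  · rintro ⟨c, v⟩ hq rfl
    have : ReachA A b v := hreach.tail hq
    have := le_colOf hA hbI this
    have := (hA.1 _ hq).2.1
    omega


lemma mem_colRows {L U : Finset (ℕ × ℕ)} {r c : ℕ} :
    r ∈ colRows L U c ↔ (r, c) ∈ L ∪ U := by
  simp only [colRows, Finset.mem_image, Finset.mem_filter]
  constructor
  · rintro ⟨⟨p1, p2⟩, ⟨hp, rfl⟩, rfl⟩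
    exact hp
  · intro h
    exact ⟨(r, c), ⟨h, rfl⟩, rfl⟩

/-- the inverse map -/
noncomputable def Psi (n : ℕ) (A : Finset (ℕ × ℕ)) :
    Finset ℕ × Finset (ℕ × ℕ) × Finset (ℕ × ℕ) :=
  ((Finset.Icc 1 n).filter (fun c => IsDest A c),
   (Finset.Icc 1 n ×ˢ Finset.Icc 1 n).filter
     (fun p => IsDest A p.2 ∧ (∃ s, (p.1, s) ∈ A ∧ colOf n A s = p.2) ∧
       ((∃ q ∈ A, q.2 = p.1) ∧ colOf n A p.1 = p.2)),
   (Finset.Icc 1 n ×ˢ Finset.Icc 1 n).filter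
     (fun p => IsDest A p.2 ∧ (∃ s, (p.1, s) ∈ A ∧ colOf n A s = p.2) ∧
       ¬((∃ q ∈ A, q.2 = p.1) ∧ colOf n A p.1 = p.2)))

lemma mem_PsiLU (hA : IsLP n A) {r c : ℕ} :
    (r, c) ∈ (Psi n A).2.1 ∪ (Psi n A).2.2 ↔
      c ∈ Finset.Icc 1 n ∧ IsDest A c ∧ ∃ s, (r, s) ∈ A ∧ colOf n A s = c := by
  simp only [Psi, Finset.mem_union, Finset.mem_filter, Finset.mem_product]
  constructor
  · rintro (⟨⟨h1, h2⟩, h3, h4, h5⟩ | ⟨⟨h1, h2⟩, h3, h4, h5⟩) <;> exact ⟨h2, h3, h4⟩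
  · rintro ⟨h2, h3, s, hs, hcol⟩
    have hrI := (arc_mem_Icc hA hs).1
    by_cases h : (∃ q ∈ A, q.2 = r) ∧ colOf n A r = c
    · exact Or.inl ⟨⟨hrI, h2⟩, h3, ⟨s, hs, hcol⟩, h⟩
    · exact Or.inr ⟨⟨hrI, h2⟩, h3, ⟨s, hs, hcol⟩, h⟩

lemma colRows_Psi (hA : IsLP n A) {c : ℕ} (hc : c ∈ Finset.Icc 1 n) (hd : IsDest A c) :
    colRows (Psi n A).2.1 (Psi n A).2.2 c = Ssrc n A c := by
  ext r
  rw [mem_colRows, mem_PsiLU hA, Ssrc, Finset.mem_filter]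
  constructor
  · rintro ⟨h1, h2, s, hs, hcol⟩
    exact ⟨(arc_mem_Icc hA hs).1, s, hs, hcol⟩
  · rintro ⟨hrI, s, hs, hcol⟩
    exact ⟨hc, hd, s, hs, hcol⟩

lemma Phi_Psi (hA : IsLP n A) : Phi (Psi n A) = A := by
  ext ⟨a, b⟩
  simp only [Phi, Finset.mem_biUnion]
  constructor
  · rintro ⟨c, hc, hmem⟩
    have hc' : c ∈ Finset.Icc 1 n ∧ IsDest A c := by
      simpa [Psi, Finset.mem_filter] using hc
    rw [colRows_Psi hA hc'.1 hc'.2] at hmem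
    exact (consec_mem_class hA hmem).1
  · intro hab
    obtain ⟨hd, hcI⟩ := dest_colOf hA hab
    refine ⟨colOf n A b, ?_, ?_⟩
    · simp only [Psi, Finset.mem_filter]
      exact ⟨hcI, hd⟩
    · rw [colRows_Psi hA hcI hd]
      exact class_arc_mem_consec hA hab rfl

lemma Psi_mem_ATstar (hA : IsLP n A) : Psi n A ∈ ATstar n := by
  have hLsub : (Psi n A).2.1 ⊆ Finset.Icc 1 n ×ˢ Finset.Icc 1 n := Finset.filter_subset _ _
  have hUsub : (Psi n A).2.2 ⊆ Finset.Icc 1 n ×ˢ Finset.Icc 1 n := Finset.filter_subset _ _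
  have hCsub : (Psi n A).1 ⊆ Finset.Icc 1 n := Finset.filter_subset _ _
  rw [ATstar, Finset.mem_filter, ATset, Finset.mem_filter]
  refine ⟨⟨?_, ?_⟩, ?_⟩
  · simp only [Finset.mem_product, Finset.mem_powerset]
    exact ⟨hCsub, hLsub, hUsub⟩
  · -- IsAT
    refine ⟨hCsub, ?_, ?_, ?_, ?_⟩
    · -- disjoint
      rw [Finset.disjoint_left]
      intro p hp hp'
      simp only [Psi, Finset.mem_filter] at hp hp'
      exact hp'.2.2.2 hp.2.2.2
    · -- condition 3
      rintro ⟨r, c⟩ hp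
      rw [mem_PsiLU hA] at hp
      obtain ⟨hcI, hdc, s, hs, hcol⟩ := hp
      have hb := hA.1 _ hs
      have hsI := (arc_mem_Icc hA hs).2
      have hslec : s ≤ colOf n A s := reach_le hA (reach_colOf hsI).1
      refine ⟨(arc_mem_Icc hA hs).1, ?_, ?_, by omega⟩
      · -- r ∉ C : r is not a destination (it has an outgoing arc)
        simp only [Psi, Finset.mem_filter]
        rintro ⟨-, -, hnd⟩
        exact hnd (r, s) hs rfl
      · simp only [Psi, Finset.mem_filter]
        exact ⟨hcI, hdc⟩
    · -- condition 4
      rintro ⟨r, c⟩ hp c' hlt hmem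
      simp only [Psi, Finset.mem_filter] at hp
      obtain ⟨-, -, -, hinc, hcolr⟩ := hp
      rw [mem_PsiLU hA] at hmem
      obtain ⟨-, -, s', hs', hcol'⟩ := hmem
      have hrI := (arc_mem_Icc hA hs').1
      have : colOf n A s' ≤ colOf n A r :=
        colOf_le_of_reach hA hrI (Relation.ReflTransGen.single hs')
      omega
    · -- condition 5
      rintro ⟨r, c⟩ hp r' hlt hmem
      simp only [Psi, Finset.mem_filter] at hp
      obtain ⟨-, hdc, hsrc, hnot⟩ := hp
      rw [mem_PsiLU hA] at hmem
      obtain ⟨-, -, s', hs', hcol'⟩ := hmem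
      -- r' and r are both in Ssrc c with r' < r, so r has an incoming class-c arc
      have hr'S : r' ∈ Ssrc n A c :=
        Finset.mem_filter.2 ⟨(arc_mem_Icc hA hs').1, s', hs', hcol'⟩
      obtain ⟨s, hs, hcol⟩ := hsrc
      have hrS : r ∈ Ssrc n A c :=
        Finset.mem_filter.2 ⟨(arc_mem_Icc hA hs).1, s, hs, hcol⟩
      obtain ⟨z, hz, hzlt, hzc⟩ := consec_pred_exists
        (Finset.mem_insert_of_mem hr'S) (Finset.mem_insert_of_mem hrS) hlt
      have := consec_mem_class hA hzc
      exact hnot ⟨⟨(z, r), this.1, rfl⟩, this.2⟩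
  · -- every column has an up arrow
    intro c hc
    simp only [Psi, Finset.mem_filter] at hc
    obtain ⟨hcI, hdc⟩ := hc
    obtain ⟨⟨⟨a, b⟩, hab, rfl⟩, hnout⟩ := hdc
    have hcol : colOf n A ((a, b).2) = (a, b).2 :=
      colOf_eq_self hA (arc_mem_Icc hA hab).2 hnout
    have haS : a ∈ Ssrc n A (a, b).2 :=
      Finset.mem_filter.2 ⟨(arc_mem_Icc hA hab).1, b, hab, hcol⟩
    have hne : (Ssrc n A (a, b).2).Nonempty := ⟨a, haS⟩
    set r := (Ssrc n A (a, b).2).min' hne with hr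
    have hrS : r ∈ Ssrc n A (a, b).2 := Finset.min'_mem _ hne
    obtain ⟨hrI, s, hs, hscol⟩ := Finset.mem_filter.1 hrS
    refine ⟨(r, (a, b).2), ?_, rfl⟩
    simp only [Psi, Finset.mem_filter, Finset.mem_product]
    refine ⟨⟨hrI, hcI⟩, ⟨⟨(a, b), hab, rfl⟩, hnout⟩, ⟨s, hs, hscol⟩, ?_⟩
    rintro ⟨⟨⟨z, r₀⟩, hzr, hr₀⟩, hcolr⟩
    simp only at hr₀
    subst hr₀
    have hzS : z ∈ Ssrc n A (a, b).2 :=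
      Finset.mem_filter.2 ⟨(arc_mem_Icc hA hzr).1, r, hzr, hcolr⟩
    have := Finset.min'_le _ z hzS
    have := (hA.1 _ hzr).2.1
    omega

section ATside
variable {C : Finset ℕ} {L U : Finset (ℕ × ℕ)}

lemma arrow_mem (hAT : IsAT n C L U) {r c : ℕ} (h : (r, c) ∈ L ∪ U) :
    r ∈ Finset.Icc 1 n ∧ r ∉ C ∧ c ∈ C ∧ r < c := hAT.2.2.1 _ h

lemma L_max (hAT : IsAT n C L U) {r c c' : ℕ} (h : (r, c) ∈ L) (h' : (r, c') ∈ L ∪ U) :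
    c' ≤ c := by
  by_contra hlt
  exact hAT.2.2.2.1 _ h c' (by omega) h'

lemma U_min (hAT : IsAT n C L U) {u c r : ℕ} (h : (u, c) ∈ U) (h' : (r, c) ∈ L ∪ U) :
    u ≤ r := by
  by_contra hlt
  exact hAT.2.2.2.2 _ h r (by omega) h'

/-- an element of `insert c (colRows L U c)` that is not the minimum has a left arrow -/
lemma nonmin_L (hAT : IsAT n C L U) {a b c : ℕ} (hb : (b, c) ∈ L ∪ U)
    (ha : (a, c) ∈ L ∪ U) (hab : a < b) : (b, c) ∈ L := by
  rcases Finset.mem_union.1 hb with h | h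
  · exact h
  · exact absurd (U_min hAT h ha) (by omega)

/-- membership in an arc of `Phi` -/
lemma mem_Phi {a b : ℕ} :
    (a, b) ∈ Phi (C, L, U) ↔ ∃ c ∈ C, (a, b) ∈ consecPairs (insert c (colRows L U c)) := by
  simp [Phi, Finset.mem_biUnion]

/-- facts about an arc coming from column `c` -/
lemma arc_facts (hAT : IsAT n C L U) {a b c : ℕ} (hc : c ∈ C)
    (h : (a, b) ∈ consecPairs (insert c (colRows L U c))) :
    (a, c) ∈ L ∪ U ∧ a < b ∧ b ≤ c ∧ (b = c ∨ (b, c) ∈ L ∪ U) := by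
  rw [mem_consecPairs] at h
  obtain ⟨ha, hb, hab, -⟩ := h
  have hbc : b = c ∨ (b, c) ∈ L ∪ U := by
    rcases Finset.mem_insert.1 hb with h' | h'
    · exact Or.inl h'
    · exact Or.inr (mem_colRows.1 h')
  have hblec : b ≤ c := by
    rcases hbc with rfl | h'
    · exact le_rfl
    · exact le_of_lt (arrow_mem hAT h').2.2.2
  have haS : (a, c) ∈ L ∪ U := by
    rcases Finset.mem_insert.1 ha with h' | h'
    · omega
    · exact mem_colRows.1 h'
  exact ⟨haS, hab, hblec, hbc⟩

lemma Phi_arc_bounds (hAT : IsAT n C L U) {a b : ℕ} (h : (a, b) ∈ Phi (C, L, U)) :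
    1 ≤ a ∧ a < b ∧ b ≤ n := by
  obtain ⟨c, hc, hcons⟩ := mem_Phi.1 h
  obtain ⟨haS, hab, hblec, -⟩ := arc_facts hAT hc hcons
  have h1 := (arrow_mem hAT haS).1
  have h2 := hAT.1 hc
  simp only [Finset.mem_Icc] at h1 h2
  omega

/-- the column producing an arc into `b` is unique, as is the arc -/
lemma incoming_unique (hAT : IsAT n C L U) {a a' b c c' : ℕ} (hc : c ∈ C) (hc' : c' ∈ C)
    (h : (a, b) ∈ consecPairs (insert c (colRows L U c)))
    (h' : (a', b) ∈ consecPairs (insert c' (colRows L U c'))) : c = c' ∧ a = a' := by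
  have hf := arc_facts hAT hc h
  have hf' := arc_facts hAT hc' h'
  have hcc : c = c' := by
    rcases hf.2.2.2 with rfl | hb
    · rcases hf'.2.2.2 with rfl | hb'
      · rfl
      · exact absurd hc (arrow_mem hAT hb').2.1
    · rcases hf'.2.2.2 with rfl | hb'
      · exact absurd hc' (arrow_mem hAT hb).2.1
      · have h1 : (b, c) ∈ L := nonmin_L hAT hb hf.1 hf.2.1
        have h2 : (b, c') ∈ L := nonmin_L hAT hb' hf'.1 hf'.2.1
        have := L_max hAT h1 (Finset.mem_union_left _ h2)
        have := L_max hAT h2 (Finset.mem_union_left _ h1)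
        omega
  subst hcc
  exact ⟨rfl, consec_left_unique h h'⟩

lemma Phi_mem_LP (hAT : IsAT n C L U) : Phi (C, L, U) ∈ LP n := by
  have hlp : IsLP n (Phi (C, L, U)) := by
    constructor
    · rintro ⟨a, b⟩ h
      exact Phi_arc_bounds hAT h
    · rintro ⟨a, b⟩ h ⟨a', b'⟩ h' he
      simp only at he
      subst he
      obtain ⟨c, hc, hcons⟩ := mem_Phi.1 h
      obtain ⟨c', hc', hcons'⟩ := mem_Phi.1 h'
      exact (incoming_unique hAT hc hc' hcons hcons').2
  rw [LP, Finset.mem_filter, Finset.mem_powerset]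
  refine ⟨?_, hlp⟩
  rintro ⟨a, b⟩ h
  have := Phi_arc_bounds hAT h
  simp only [Finset.mem_product, Finset.mem_Icc]
  omega

end ATside

section ATside2
variable {C : Finset ℕ} {L U : Finset (ℕ × ℕ)}

lemma col_no_out (hAT : IsAT n C L U) {c : ℕ} (hc : c ∈ C) :
    ∀ q ∈ Phi (C, L, U), q.1 ≠ c := by
  rintro ⟨a, b⟩ hq rfl
  obtain ⟨c', hc', hcons⟩ := mem_Phi.1 hq
  exact (arrow_mem hAT (arc_facts hAT hc' hcons).1).2.1 hc

lemma reach_from_col (hAT : IsAT n C L U) {c v : ℕ} (hc : c ∈ C)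
    (h : ReachA (Phi (C, L, U)) c v) : v = c := by
  rcases h.cases_head with he | ⟨x, hx, -⟩
  · exact he.symm
  · exact absurd rfl (col_no_out hAT hc _ hx)

lemma chain_reach (hAT : IsAT n C L U) {c : ℕ} (hc : c ∈ C) :
    ∀ b ∈ insert c (colRows L U c), ReachA (Phi (C, L, U)) b c := by
  intro b hb
  generalize hk : c - b = k
  induction k using Nat.strong_induction_on generalizing b with
  | _ k ih =>
    by_cases hbc : b = c
    · exact hbc ▸ Relation.ReflTransGen.refl
    · have hbS : (b, c) ∈ L ∪ U :=
        mem_colRows.1 ((Finset.mem_insert.1 hb).resolve_left hbc)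
      have hblt : b < c := (arrow_mem hAT hbS).2.2.2
      obtain ⟨z, hzW, hbz, hzc⟩ := consec_succ_exists hb (Finset.mem_insert_self c _) hblt
      have hzlec : z ≤ c := by
        rcases Finset.mem_insert.1 hzW with rfl | h'
        · exact le_rfl
        · exact le_of_lt (arrow_mem hAT (mem_colRows.1 h')).2.2.2
      have harc : (b, z) ∈ Phi (C, L, U) := mem_Phi.2 ⟨c, hc, hzc⟩
      exact Relation.ReflTransGen.head harc (ih (c - z) (by omega) z hzW rfl)

lemma reach_bound (hAT : IsAT n C L U) {b v : ℕ} (hv : ReachA (Phi (C, L, U)) b v) :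
    ∀ c : ℕ, (b, c) ∈ L → v ≤ c := by
  induction hv using Relation.ReflTransGen.head_induction_on with
  | refl => exact fun c hbc => le_of_lt (arrow_mem hAT (Finset.mem_union_left _ hbc)).2.2.2
  | head hbx hxv ih =>
    intro c hbc
    rename_i b' x
    obtain ⟨c'', hc'', hcons⟩ := mem_Phi.1 hbx
    obtain ⟨hbS, hbxlt, hxle, hxcase⟩ := arc_facts hAT hc'' hcons
    have hle : c'' ≤ c := L_max hAT hbc hbS
    rcases hxcase with rfl | hxS
    · have := reach_from_col hAT hc'' hxv
      omega
    · have hxL : (x, c'') ∈ L := nonmin_L hAT hxS hbS hbxlt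
      have := ih _ hxL
      omega

lemma colOf_col (hAT : IsAT n C L U) {c : ℕ} (hc : c ∈ C) :
    colOf n (Phi (C, L, U)) c = c := by
  have hlp : IsLP n (Phi (C, L, U)) := (Finset.mem_filter.1 (Phi_mem_LP hAT)).2
  exact colOf_eq_self hlp (hAT.1 hc) (col_no_out hAT hc)

lemma colOf_nonmin (hAT : IsAT n C L U) {a b c : ℕ} (hc : c ∈ C)
    (hb : (b, c) ∈ L ∪ U) (ha : (a, c) ∈ L ∪ U) (hab : a < b) :
    colOf n (Phi (C, L, U)) b = c := by
  have hlp : IsLP n (Phi (C, L, U)) := (Finset.mem_filter.1 (Phi_mem_LP hAT)).2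
  have hbI := (arrow_mem hAT hb).1
  have hbL : (b, c) ∈ L := nonmin_L hAT hb ha hab
  have h1 : colOf n (Phi (C, L, U)) b ≤ c :=
    reach_bound hAT (reach_colOf hbI).1 c hbL
  have h2 : c ≤ colOf n (Phi (C, L, U)) b :=
    le_colOf hlp hbI
      (chain_reach hAT hc b (Finset.mem_insert_of_mem (mem_colRows.2 hb)))
  omega

lemma dest_iff_col (hAT : IsAT n C L U) (hstar : ∀ c ∈ C, ∃ p ∈ U, p.2 = c) {c : ℕ}
    (hcI : c ∈ Finset.Icc 1 n) : IsDest (Phi (C, L, U)) c ↔ c ∈ C := by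
  constructor
  · rintro ⟨⟨⟨a, b⟩, hab, rfl⟩, hnout⟩
    obtain ⟨c', hc', hcons⟩ := mem_Phi.1 hab
    obtain ⟨haS, hablt, hble, hbcase⟩ := arc_facts hAT hc' hcons
    rcases hbcase with rfl | hbS
    · exact hc'
    · exfalso
      have hblt : b < c' := (arrow_mem hAT hbS).2.2.2
      obtain ⟨z, hzW, hbz, hzc⟩ := consec_succ_exists
        (Finset.mem_insert_of_mem (mem_colRows.2 hbS)) (Finset.mem_insert_self c' _) hblt
      exact hnout (b, z) (mem_Phi.2 ⟨c', hc', hzc⟩) rfl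
  · intro hc
    obtain ⟨⟨u, c₀⟩, hu, hu2⟩ := hstar c hc
    simp only at hu2
    rw [hu2] at hu
    have huS : (u, c) ∈ L ∪ U := Finset.mem_union_right _ hu
    have hult : u < c := (arrow_mem hAT huS).2.2.2
    obtain ⟨z, hzW, hzlt, hzc⟩ := consec_pred_exists
      (Finset.mem_insert_of_mem (mem_colRows.2 huS)) (Finset.mem_insert_self c _) hult
    exact ⟨⟨(z, c), mem_Phi.2 ⟨c, hc, hzc⟩, rfl⟩, col_no_out hAT hc⟩

lemma Ssrc_iff (hAT : IsAT n C L U) {r c : ℕ} (hc : c ∈ C) :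
    (∃ s, (r, s) ∈ Phi (C, L, U) ∧ colOf n (Phi (C, L, U)) s = c) ↔ (r, c) ∈ L ∪ U := by
  constructor
  · rintro ⟨s, hs, hcol⟩
    obtain ⟨c', hc', hcons⟩ := mem_Phi.1 hs
    obtain ⟨hrS, hrslt, hsle, hscase⟩ := arc_facts hAT hc' hcons
    have : colOf n (Phi (C, L, U)) s = c' := by
      rcases hscase with rfl | hsS
      · exact colOf_col hAT hc'
      · exact colOf_nonmin hAT hc' hsS hrS hrslt
    rw [this] at hcol
    exact hcol ▸ hrS
  · intro hrS
    have hrlt : r < c := (arrow_mem hAT hrS).2.2.2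
    obtain ⟨z, hzW, hrz, hzc⟩ := consec_succ_exists
      (Finset.mem_insert_of_mem (mem_colRows.2 hrS)) (Finset.mem_insert_self c _) hrlt
    refine ⟨z, mem_Phi.2 ⟨c, hc, hzc⟩, ?_⟩
    rcases Finset.mem_insert.1 hzW with rfl | h'
    · exact colOf_col hAT hc
    · exact colOf_nonmin hAT hc (mem_colRows.1 h') hrS hrz

lemma L_iff (hAT : IsAT n C L U) (hstar : ∀ c ∈ C, ∃ p ∈ U, p.2 = c) {r c : ℕ}
    (hc : c ∈ C) (hrS : (r, c) ∈ L ∪ U) :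
    (r, c) ∈ L ↔
      (∃ q ∈ Phi (C, L, U), q.2 = r) ∧ colOf n (Phi (C, L, U)) r = c := by
  constructor
  · intro hrL
    obtain ⟨⟨u, c₀⟩, hu, hu2⟩ := hstar c hc
    simp only at hu2
    rw [hu2] at hu
    have huS : (u, c) ∈ L ∪ U := Finset.mem_union_right _ hu
    have hune : u ≠ r := by
      rintro rfl
      exact (Finset.disjoint_left.1 hAT.2.1) hrL hu
    have hult : u < r := lt_of_le_of_ne (U_min hAT hu (Finset.mem_union_left _ hrL)) hune
    obtain ⟨z, hzW, hzlt, hzc⟩ := consec_pred_exists (S := insert c (colRows L U c))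
      (Finset.mem_insert_of_mem (mem_colRows.2 huS))
      (Finset.mem_insert_of_mem (mem_colRows.2 hrS)) hult
    have hzS : (z, c) ∈ L ∪ U := by
      rcases Finset.mem_insert.1 hzW with he | h'
      · exfalso
        rw [he] at hzlt
        have h2 := (arrow_mem hAT hrS).2.2.2
        omega
      · exact mem_colRows.1 h'
    exact ⟨⟨(z, r), mem_Phi.2 ⟨c, hc, hzc⟩, rfl⟩, colOf_nonmin hAT hc hrS hzS hzlt⟩
  · rintro ⟨⟨⟨z, r₀⟩, hzr, hr₀⟩, hcol⟩
    simp only at hr₀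
    rw [hr₀] at hzr
    obtain ⟨c₂, hc₂, hcons⟩ := mem_Phi.1 hzr
    obtain ⟨hzS, hzrlt, hrle, hrcase⟩ := arc_facts hAT hc₂ hcons
    rcases hrcase with rfl | hrS₂
    · exact absurd hc₂ (arrow_mem hAT hrS).2.1
    · have : colOf n (Phi (C, L, U)) r = c₂ := colOf_nonmin hAT hc₂ hrS₂ hzS hzrlt
      rw [this] at hcol
      subst hcol
      exact nonmin_L hAT hrS₂ hzS hzrlt

lemma Psi_Phi (hAT : IsAT n C L U) (hstar : ∀ c ∈ C, ∃ p ∈ U, p.2 = c) :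
    Psi n (Phi (C, L, U)) = (C, L, U) := by
  have hlp : IsLP n (Phi (C, L, U)) := (Finset.mem_filter.1 (Phi_mem_LP hAT)).2
  have hcomp1 : (Psi n (Phi (C, L, U))).1 = C := by
    ext c
    simp only [Psi, Finset.mem_filter]
    constructor
    · rintro ⟨hcI, hd⟩
      exact (dest_iff_col hAT hstar hcI).1 hd
    · intro hc
      exact ⟨hAT.1 hc, (dest_iff_col hAT hstar (hAT.1 hc)).2 hc⟩
  have hcomp2 : (Psi n (Phi (C, L, U))).2.1 = L := by
    ext ⟨r, c⟩
    simp only [Psi, Finset.mem_filter, Finset.mem_product]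
    constructor
    · rintro ⟨⟨hrI, hcI⟩, hd, hsrc, hincol⟩
      have hc : c ∈ C := (dest_iff_col hAT hstar hcI).1 hd
      have hrS : (r, c) ∈ L ∪ U := (Ssrc_iff hAT hc).1 hsrc
      exact (L_iff hAT hstar hc hrS).2 hincol
    · intro hrL
      have hrS : (r, c) ∈ L ∪ U := Finset.mem_union_left _ hrL
      have hc : c ∈ C := (arrow_mem hAT hrS).2.2.1
      have hcI : c ∈ Finset.Icc 1 n := hAT.1 hc
      exact ⟨⟨(arrow_mem hAT hrS).1, hcI⟩, (dest_iff_col hAT hstar hcI).2 hc,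
        (Ssrc_iff hAT hc).2 hrS, (L_iff hAT hstar hc hrS).1 hrL⟩
  have hcomp3 : (Psi n (Phi (C, L, U))).2.2 = U := by
    ext ⟨r, c⟩
    simp only [Psi, Finset.mem_filter, Finset.mem_product]
    constructor
    · rintro ⟨⟨hrI, hcI⟩, hd, hsrc, hnincol⟩
      have hc : c ∈ C := (dest_iff_col hAT hstar hcI).1 hd
      have hrS : (r, c) ∈ L ∪ U := (Ssrc_iff hAT hc).1 hsrc
      rcases Finset.mem_union.1 hrS with hrL | hrU
      · exact absurd ((L_iff hAT hstar hc hrS).1 hrL) hnincol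
      · exact hrU
    · intro hrU
      have hrS : (r, c) ∈ L ∪ U := Finset.mem_union_right _ hrU
      have hc : c ∈ C := (arrow_mem hAT hrS).2.2.1
      have hcI : c ∈ Finset.Icc 1 n := hAT.1 hc
      refine ⟨⟨(arrow_mem hAT hrS).1, hcI⟩, (dest_iff_col hAT hstar hcI).2 hc,
        (Ssrc_iff hAT hc).2 hrS, ?_⟩
      intro hincol
      have : (r, c) ∈ L := (L_iff hAT hstar hc hrS).2 hincol
      exact (Finset.disjoint_left.1 hAT.2.1) this hrU
  exact Prod.ext hcomp1 (Prod.ext hcomp2 hcomp3)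

end ATside2

end PhiAux

/-- the map `Φ` is a bijection from alternative tableaux of
size `n` in which every column contains an up arrow onto linked partitions
of `{1,…,n}`. -/
theorem Phi_bijection (n : ℕ) :
    Set.BijOn Phi (ATstar n : Set _) (LP n : Set _) := by
  have key : ∀ T ∈ ATstar n, Phi T ∈ LP n ∧ Psi n (Phi T) = T := by
    rintro ⟨C, L, U⟩ hT
    rw [ATstar, Finset.mem_filter] at hT
    have hAT : IsAT n C L U := (Finset.mem_filter.1 hT.1).2
    exact ⟨Phi_mem_LP hAT, Psi_Phi hAT hT.2⟩
  refine ⟨?_, ?_, ?_⟩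
  · intro T hT
    simpa using (key T (by simpa using hT)).1
  · intro T hT T' hT' h
    rw [← (key T (by simpa using hT)).2, ← (key T' (by simpa using hT')).2, h]
  · intro A hA
    have hA' : A ∈ LP n := by simpa using hA
    have hlp : IsLP n A := (Finset.mem_filter.1 hA').2
    exact ⟨Psi n A, by simpa using Psi_mem_ATstar hlp, Phi_Psi hlp⟩
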